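/- Let c, h > 0 and N ≥ 1. Let A_h^{FEM} be the (N+1)×(N+1) real matrix equal to (c²/h²) times the tridiagonal matrix with all diagonal entries 2 except the last diagonal entry 1, and all sub- and super-diagonal entries −1, and let M be the (N+1)×(N+1) tridiagonal matrix with all diagonal entries 2/3 except the last diagonal entry 1/3, and all sub- and super-diagonal entries 1/6. Then M is invertible, and the eigenvalues of M⁻¹A_h^{FEM} are exactly the N+1 numbers λ_j = (c²/h²)·( 6 − 6 cos θ_j ) / ( 2 + cos θ_j ), where θ_j = (2j−1)π / (2(N+1)), j = 1, …, N+1. -/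

import Mathlib

open Matrix

/-- The matrix (c²/h²) × tridiag(−1, 2, −1) of size n, with last diagonal entry 1
instead of 2. -/
noncomputable def stiffFEM (c h : ℝ) (n : ℕ) : Matrix (Fin n) (Fin n) ℝ :=
  Matrix.of fun i j =>
    (c^2/h^2) * (if i = j then (if (i:ℕ) = n - 1 then 1 else 2)
      else if (i:ℕ)+1 = (j:ℕ) ∨ (j:ℕ)+1 = (i:ℕ) then -1 else 0)

/-- The tridiagonal mass matrix of size n: diagonal 2/3 except last entry 1/3,
off-diagonal entries 1/6. -/
noncomputable def massFEM (n : ℕ) : Matrix (Fin n) (Fin n) ℝ :=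
  Matrix.of fun i j =>
    if i = j then (if (i:ℕ) = n - 1 then 1/3 else 2/3)
    else if (i:ℕ)+1 = (j:ℕ) ∨ (j:ℕ)+1 = (i:ℕ) then 1/6 else 0


open Polynomial in
lemma sum_ite_nat_eq {n : ℕ} (m : ℕ) (f : Fin n → ℝ) :
    ∑ j : Fin n, (if m = (j:ℕ) then f j else 0) = if hm : m < n then f ⟨m, hm⟩ else 0 := by
  split
  · next hm =>
      rw [Finset.sum_eq_single (⟨m, hm⟩ : Fin n)]
      · simp
      · intro b _ hb
        rw [if_neg]
        intro hc
        exact hb (Fin.ext hc.symm)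
      · simp
  · next hm =>
      apply Finset.sum_eq_zero
      intro j _
      rw [if_neg]
      intro hc
      exact hm (hc ▸ j.isLt)

lemma row_sum {n : ℕ} (i : Fin n) (dmain dlast e : ℝ) (w : Fin n → ℝ) :
    (∑ k : Fin n, (if i = k then (if (i:ℕ) = n - 1 then dlast else dmain)
      else if (i:ℕ)+1 = (k:ℕ) ∨ (k:ℕ)+1 = (i:ℕ) then e else 0) * w k)
    = (if (i:ℕ) = n - 1 then dlast else dmain) * w i
      + (if hlt : (i:ℕ)+1 < n then e * w ⟨(i:ℕ)+1, hlt⟩ else 0)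
      + (if h0 : 0 < (i:ℕ) then e * w ⟨(i:ℕ)-1, Nat.lt_of_le_of_lt (Nat.sub_le _ _) i.isLt⟩ else 0) := by
  have hsplit : ∀ k : Fin n, (if i = k then (if (i:ℕ) = n - 1 then dlast else dmain)
      else if (i:ℕ)+1 = (k:ℕ) ∨ (k:ℕ)+1 = (i:ℕ) then e else 0) * w k
      = (if (i:ℕ) = (k:ℕ) then (if (i:ℕ) = n - 1 then dlast else dmain) * w k else 0)
        + (if (i:ℕ)+1 = (k:ℕ) then e * w k else 0)
        + (if 0 < (i:ℕ) then (if (i:ℕ)-1 = (k:ℕ) then e * w k else 0) else 0) := by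
    intro k
    simp only [Fin.ext_iff]
    split_ifs <;> first | (exfalso; omega) | ring1
  rw [Finset.sum_congr rfl (fun k _ => hsplit k)]
  rw [Finset.sum_add_distrib, Finset.sum_add_distrib]
  rw [sum_ite_nat_eq (i:ℕ) (fun k => (if (i:ℕ) = n - 1 then dlast else dmain) * w k),
      sum_ite_nat_eq ((i:ℕ)+1) (fun k => e * w k)]
  congr 1
  · congr 1
    rw [dif_pos i.isLt]
  · by_cases h0 : 0 < (i:ℕ)
    · simp only [if_pos h0, dif_pos h0]
      rw [sum_ite_nat_eq ((i:ℕ)-1) (fun k => e * w k),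
        dif_pos (Nat.lt_of_le_of_lt (Nat.sub_le _ _) i.isLt)]
    · simp only [if_neg h0, dif_neg h0, Finset.sum_const_zero]

lemma mass_det_ne_zero (N : ℕ) (hN : 1 ≤ N) : (massFEM (N+1)).det ≠ 0 := by
  apply det_ne_zero_of_sum_row_lt_diag
  intro k
  have key : ∀ m : ℕ, ∑ j : Fin (N+1), (if m = (j:ℕ) then (1/6:ℝ) else 0) ≤ 1/6 := by
    intro m
    rw [sum_ite_nat_eq]
    split <;> norm_num
  have key0 : ∀ m : ℕ, N+1 ≤ m → ∑ j : Fin (N+1), (if m = (j:ℕ) then (1/6:ℝ) else 0) = 0 := by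
    intro m hm
    rw [sum_ite_nat_eq, dif_neg (by omega)]
  set g : Fin (N+1) → ℝ := fun j =>
    (if (k:ℕ)+1 = (j:ℕ) then (1/6:ℝ) else 0)
    + (if 0 < (k:ℕ) then (if (k:ℕ)-1 = (j:ℕ) then (1/6:ℝ) else 0) else 0) with hg
  have hgnn : ∀ j, 0 ≤ g j := by
    intro j; rw [hg]; dsimp only; split_ifs <;> norm_num
  have hbound : ∑ j ∈ Finset.univ.erase k, ‖massFEM (N+1) k j‖ ≤ ∑ j : Fin (N+1), g j := by
    refine le_trans (Finset.sum_le_sum ?_) (Finset.sum_le_sum_of_subset_of_nonneg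
      (Finset.subset_univ _) (fun j _ _ => hgnn j))
    intro j hj
    have hjk : j ≠ k := Finset.ne_of_mem_erase hj
    have hjk' : ¬ (k = j) := fun hc => hjk hc.symm
    rw [hg]
    simp only [massFEM, Matrix.of_apply, if_neg hjk', Real.norm_eq_abs]
    split_ifs <;> first | (exfalso; omega) | simp [abs_of_nonneg] | norm_num [abs_of_nonneg]
  have hsum : ∑ j : Fin (N+1), g j
      = (∑ j : Fin (N+1), (if (k:ℕ)+1 = (j:ℕ) then (1/6:ℝ) else 0))
        + (if 0 < (k:ℕ) then ∑ j : Fin (N+1), (if (k:ℕ)-1 = (j:ℕ) then (1/6:ℝ) else 0) else 0) := by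
    rw [hg, Finset.sum_add_distrib]
    congr 1
    split_ifs <;> simp
  have hdiag : massFEM (N+1) k k = if (k:ℕ) = N then 1/3 else 2/3 := by
    simp only [massFEM, Matrix.of_apply, if_pos rfl]
    norm_num
  rcases eq_or_ne (k:ℕ) N with hk | hk
  · have h1 : ∑ j : Fin (N+1), (if (k:ℕ)+1 = (j:ℕ) then (1/6:ℝ) else 0) = 0 :=
      key0 _ (by omega)
    have h2 : (if 0 < (k:ℕ) then ∑ j : Fin (N+1), (if (k:ℕ)-1 = (j:ℕ) then (1/6:ℝ) else 0) else 0) ≤ 1/6 := by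
      split
      · exact key _
      · norm_num
    rw [hdiag, if_pos hk, Real.norm_eq_abs]
    calc ∑ j ∈ Finset.univ.erase k, ‖massFEM (N+1) k j‖
        ≤ ∑ j : Fin (N+1), g j := hbound
      _ = _ + _ := hsum
      _ ≤ 0 + 1/6 := by rw [h1]; exact add_le_add le_rfl h2
      _ < |(1/3 : ℝ)| := by rw [abs_of_pos (by norm_num)]; norm_num
  · have h1 : ∑ j : Fin (N+1), (if (k:ℕ)+1 = (j:ℕ) then (1/6:ℝ) else 0) ≤ 1/6 := key _
    have h2 : (if 0 < (k:ℕ) then ∑ j : Fin (N+1), (if (k:ℕ)-1 = (j:ℕ) then (1/6:ℝ) else 0) else 0) ≤ 1/6 := by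
      split
      · exact key _
      · norm_num
    rw [hdiag, if_neg hk, Real.norm_eq_abs]
    calc ∑ j ∈ Finset.univ.erase k, ‖massFEM (N+1) k j‖
        ≤ ∑ j : Fin (N+1), g j := hbound
      _ = _ + _ := hsum
      _ ≤ 1/6 + 1/6 := add_le_add h1 h2
      _ < |(2/3 : ℝ)| := by rw [abs_of_pos (by norm_num)]; norm_num

open Polynomial in
lemma spectrum_count {n : ℕ} (B : Matrix (Fin n) (Fin n) ℂ) (lam : Fin n → ℂ)
    (hinj : Function.Injective lam)
    (heig : ∀ j, ∃ w : Fin n → ℂ, w ≠ 0 ∧ B.mulVec w = lam j • w) (μ : ℂ) :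
    (∃ w : Fin n → ℂ, w ≠ 0 ∧ B.mulVec w = μ • w) ↔ ∃ j, μ = lam j := by
  classical
  have charpoly_eval_eq : ∀ (ν : ℂ), B.charpoly.eval ν = (ν • (1 : Matrix (Fin n) (Fin n) ℂ) - B).det := by
    intro ν
    rw [Matrix.charpoly, eval_det, matPolyEquiv_charmatrix, eval_sub, eval_X, eval_C]
    congr 1
    ext i j
    simp [Matrix.scalar, Matrix.smul_apply, Matrix.one_apply, Matrix.diagonal]
  have eig_iff_det : ∀ (ν : ℂ), (∃ w : Fin n → ℂ, w ≠ 0 ∧ B.mulVec w = ν • w)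
      ↔ (ν • (1 : Matrix (Fin n) (Fin n) ℂ) - B).det = 0 := by
    intro ν
    rw [← Matrix.exists_mulVec_eq_zero_iff]
    apply exists_congr
    intro w
    apply and_congr_right
    intro _
    rw [Matrix.sub_mulVec, Matrix.smul_mulVec, Matrix.one_mulVec, sub_eq_zero, eq_comm]
  have hpne : B.charpoly ≠ 0 := B.charpoly_monic.ne_zero
  have hdeg : B.charpoly.natDegree = n := by
    rw [Matrix.charpoly_natDegree_eq_dim]; exact Fintype.card_fin _
  have hrootj : ∀ j, B.charpoly.IsRoot (lam j) := by
    intro j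
    obtain ⟨w, hw0, hw⟩ := heig j
    rw [Polynomial.IsRoot, charpoly_eval_eq]
    exact (eig_iff_det (lam j)).mp ⟨w, hw0, hw⟩
  have hsub : Finset.image lam Finset.univ ⊆ B.charpoly.roots.toFinset := by
    intro x hx
    obtain ⟨j, _, rfl⟩ := Finset.mem_image.mp hx
    rw [Multiset.mem_toFinset, Polynomial.mem_roots hpne]
    exact hrootj j
  have hcard : (Finset.image lam Finset.univ).card = n := by
    rw [Finset.card_image_of_injective _ hinj, Finset.card_univ, Fintype.card_fin]
  have hle : B.charpoly.roots.toFinset.card ≤ n :=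
    le_trans (Multiset.toFinset_card_le _) (le_trans (Polynomial.card_roots' _) hdeg.le)
  have heq : Finset.image lam Finset.univ = B.charpoly.roots.toFinset :=
    Finset.eq_of_subset_of_card_le hsub (by omega)
  constructor
  · intro hex
    have hdet0 : (μ • (1 : Matrix (Fin n) (Fin n) ℂ) - B).det = 0 := (eig_iff_det μ).mp hex
    have hroot : B.charpoly.IsRoot μ := by rw [Polynomial.IsRoot, charpoly_eval_eq]; exact hdet0
    have hmem : μ ∈ B.charpoly.roots.toFinset :=
      Multiset.mem_toFinset.mpr ((Polynomial.mem_roots hpne).mpr hroot)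
    rw [← heq] at hmem
    obtain ⟨j, _, hj⟩ := Finset.mem_image.mp hmem
    exact ⟨j, hj.symm⟩
  · rintro ⟨j, rfl⟩
    exact heig j

lemma theta_bounds (N : ℕ) (j : Fin (N+1)) :
    0 < (2*((j:ℕ):ℝ)+1) * Real.pi / (2*((N:ℝ)+1)) ∧
    (2*((j:ℕ):ℝ)+1) * Real.pi / (2*((N:ℝ)+1)) < Real.pi := by
  have hπ := Real.pi_pos
  have hj : ((j:ℕ):ℝ) ≤ (N:ℝ) := by exact_mod_cast Nat.lt_succ_iff.mp j.isLt
  have hj0 : (0:ℝ) ≤ ((j:ℕ):ℝ) := Nat.cast_nonneg _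
  constructor
  · apply div_pos (by nlinarith) (by positivity)
  · rw [div_lt_iff₀ (by positivity)]
    nlinarith

lemma lam_inj (c h : ℝ) (hc : 0 < c) (hh : 0 < h) (N : ℕ) :
    Function.Injective (fun j : Fin (N+1) =>
      (c^2/h^2) * (6 - 6*Real.cos ((2*((j:ℕ):ℝ)+1) * Real.pi / (2*((N:ℝ)+1)))) /
        (2 + Real.cos ((2*((j:ℕ):ℝ)+1) * Real.pi / (2*((N:ℝ)+1))))) := by
  intro a b hab
  simp only at hab
  have hπ := Real.pi_pos
  obtain ⟨ha1, ha2⟩ := theta_bounds N a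
  obtain ⟨hb1, hb2⟩ := theta_bounds N b
  set θa := (2*((a:ℕ):ℝ)+1) * Real.pi / (2*((N:ℝ)+1)) with hθa
  set θb := (2*((b:ℕ):ℝ)+1) * Real.pi / (2*((N:ℝ)+1)) with hθb
  have hca : 0 < 2 + Real.cos θa := by have := Real.neg_one_le_cos θa; linarith
  have hcb : 0 < 2 + Real.cos θb := by have := Real.neg_one_le_cos θb; linarith
  have hK : (0:ℝ) < c^2/h^2 := by positivity
  rw [div_eq_div_iff (ne_of_gt hca) (ne_of_gt hcb)] at hab
  have h2 : (6 - 6*Real.cos θa) * (2 + Real.cos θb) = (6 - 6*Real.cos θb) * (2 + Real.cos θa) := by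
    have := mul_left_cancel₀ (ne_of_gt hK)
      (show (c^2/h^2) * ((6 - 6*Real.cos θa) * (2 + Real.cos θb))
          = (c^2/h^2) * ((6 - 6*Real.cos θb) * (2 + Real.cos θa)) by linear_combination hab)
    exact this
  have hcc : Real.cos θa = Real.cos θb := by nlinarith [h2]
  have hθ : θa = θb := Real.injOn_cos ⟨le_of_lt ha1, le_of_lt ha2⟩ ⟨le_of_lt hb1, le_of_lt hb2⟩ hcc
  rw [hθa, hθb] at hθ
  have hNne : (2*((N:ℝ)+1)) ≠ 0 := by positivity
  have h3 : (2*((a:ℕ):ℝ)+1) * Real.pi = (2*((b:ℕ):ℝ)+1) * Real.pi :=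
    (div_left_inj' hNne).mp hθ
  have h4 : (2*((a:ℕ):ℝ)+1) = (2*((b:ℕ):ℝ)+1) :=
    mul_right_cancel₀ Real.pi_ne_zero h3
  have h5 : ((a:ℕ):ℝ) = ((b:ℕ):ℝ) := by linarith
  have h6 : (a:ℕ) = (b:ℕ) := by exact_mod_cast h5
  exact Fin.ext h6

lemma eigen_real (c h : ℝ) (hh : h ≠ 0) (N : ℕ) (hN : 1 ≤ N) (θ : ℝ)
    (hbc : Real.cos (((N:ℝ)+1) * θ) = 0) :
    (stiffFEM c h (N+1)).mulVec (fun k : Fin (N+1) => Real.sin ((((k:ℕ):ℝ)+1) * θ))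
      = ((c^2/h^2) * (6 - 6*Real.cos θ) / (2 + Real.cos θ)) •
        (massFEM (N+1)).mulVec (fun k : Fin (N+1) => Real.sin ((((k:ℕ):ℝ)+1) * θ)) := by
  have h2c : (2 : ℝ) + Real.cos θ ≠ 0 := by
    have := Real.neg_one_le_cos θ; intro hcon; linarith
  funext i
  set w : Fin (N+1) → ℝ := fun k => Real.sin ((((k:ℕ):ℝ)+1) * θ) with hw
  show ∑ k, stiffFEM c h (N+1) i k * w k
      = ((c^2/h^2) * (6 - 6*Real.cos θ) / (2 + Real.cos θ)) * ∑ k, massFEM (N+1) i k * w k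
  have hstiff : ∑ k, stiffFEM c h (N+1) i k * w k
      = (c^2/h^2) * ∑ k, (if i = k then (if (i:ℕ) = (N+1) - 1 then (1:ℝ) else 2)
          else if (i:ℕ)+1 = (k:ℕ) ∨ (k:ℕ)+1 = (i:ℕ) then -1 else 0) * w k := by
    rw [Finset.mul_sum]
    refine Finset.sum_congr rfl fun k _ => ?_
    show (c^2/h^2) * _ * w k = _
    ring
  rw [hstiff]
  show _ = _ * ∑ k, (if i = k then (if (i:ℕ) = (N+1) - 1 then (1/3:ℝ) else 2/3)
      else if (i:ℕ)+1 = (k:ℕ) ∨ (k:ℕ)+1 = (i:ℕ) then 1/6 else 0) * w k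
  rw [row_sum, row_sum]
  rcases eq_or_ne (i:ℕ) N with hi | hi
  · -- last row
    have hi' : (i:ℕ) = (N+1) - 1 := by omega
    rw [if_pos hi', if_pos hi', dif_neg (by omega : ¬ ((i:ℕ)+1 < N+1)),
        dif_neg (by omega : ¬ ((i:ℕ)+1 < N+1)),
        dif_pos (by omega : 0 < (i:ℕ)), dif_pos (by omega : 0 < (i:ℕ))]
    have hwi : w i = Real.sin (((N:ℝ)+1) * θ) := by
      simp only [hw]; norm_num [hi]
    have hwim : w ⟨(i:ℕ)-1, Nat.lt_of_le_of_lt (Nat.sub_le _ _) i.isLt⟩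
        = Real.sin ((N:ℝ) * θ) := by
      simp only [hw]
      congr 1
      push_cast [Nat.cast_sub (by omega : 1 ≤ (i:ℕ))]
      rw [hi]
      ring
    have hsN : Real.sin ((N:ℝ)*θ) = Real.sin (((N:ℝ)+1)*θ) * Real.cos θ := by
      have h1 : (N:ℝ)*θ = ((N:ℝ)+1)*θ - θ := by ring
      rw [h1, Real.sin_sub, hbc]; ring
    rw [hwi, hwim, hsN]
    field_simp
    ring
  · -- not last row
    have hi' : ¬ ((i:ℕ) = (N+1) - 1) := by omega
    have hlt : (i:ℕ)+1 < N+1 := by omega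
    rw [if_neg hi', if_neg hi', dif_pos hlt, dif_pos hlt]
    have hwi : w i = Real.sin ((((i:ℕ):ℝ)+1) * θ) := rfl
    have hwip : w ⟨(i:ℕ)+1, hlt⟩ = Real.sin (((((i:ℕ):ℝ)+1)+1) * θ) := by
      simp only [hw]
      congr 1
      push_cast
      ring
    have hsadd : Real.sin (((((i:ℕ):ℝ)+1)+1) * θ)
        = Real.sin ((((i:ℕ):ℝ)+1)*θ) * Real.cos θ + Real.cos ((((i:ℕ):ℝ)+1)*θ) * Real.sin θ := by
      have h1 : ((((i:ℕ):ℝ)+1)+1) * θ = (((i:ℕ):ℝ)+1)*θ + θ := by ring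
      rw [h1, Real.sin_add]
    by_cases h0 : 0 < (i:ℕ)
    · rw [dif_pos h0, dif_pos h0]
      have hwim : w ⟨(i:ℕ)-1, Nat.lt_of_le_of_lt (Nat.sub_le _ _) i.isLt⟩
          = Real.sin ((((i:ℕ):ℝ)) * θ) := by
        simp only [hw]
        congr 1
        push_cast [Nat.cast_sub (by omega : 1 ≤ (i:ℕ))]
        ring
      have hssub : Real.sin ((((i:ℕ):ℝ)) * θ)
          = Real.sin ((((i:ℕ):ℝ)+1)*θ) * Real.cos θ - Real.cos ((((i:ℕ):ℝ)+1)*θ) * Real.sin θ := by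
        have h1 : (((i:ℕ):ℝ)) * θ = (((i:ℕ):ℝ)+1)*θ - θ := by ring
        rw [h1, Real.sin_sub]
      rw [hwi, hwip, hwim, hsadd, hssub]
      field_simp
      ring
    · rw [dif_neg h0, dif_neg h0]
      have hi0 : (i:ℕ) = 0 := by omega
      rw [hwi, hwip, hsadd, hi0]
      have hs0 : Real.sin ((((0:ℕ):ℝ)+1) * θ) = Real.sin θ := by norm_num
      have hc0 : Real.cos ((((0:ℕ):ℝ)+1) * θ) = Real.cos θ := by norm_num
      rw [hs0, hc0]
      field_simp
      ring

lemma eigen_complex (c h : ℝ) (hc : 0 < c) (hh : 0 < h) (N : ℕ) (hN : 1 ≤ N) (j : Fin (N+1)) :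
    ∃ w : Fin (N+1) → ℂ, w ≠ 0 ∧
      (((massFEM (N+1))⁻¹ * stiffFEM c h (N+1)).map (fun x : ℝ => (x:ℂ))).mulVec w
        = ((((c^2/h^2) * (6 - 6*Real.cos ((2*((j:ℕ):ℝ)+1) * Real.pi / (2*((N:ℝ)+1)))) /
          (2 + Real.cos ((2*((j:ℕ):ℝ)+1) * Real.pi / (2*((N:ℝ)+1)))) : ℝ)) : ℂ) • w := by
  set θ : ℝ := (2*((j:ℕ):ℝ)+1) * Real.pi / (2*((N:ℝ)+1)) with hθ
  set lam : ℝ := (c^2/h^2) * (6 - 6*Real.cos θ) / (2 + Real.cos θ) with hlam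
  obtain ⟨hθ1, hθ2⟩ := theta_bounds N j
  have hbc : Real.cos (((N:ℝ)+1) * θ) = 0 := by
    have harg : ((N:ℝ)+1) * θ = (2*((j:ℤ):ℝ)+1) * Real.pi / 2 := by
      rw [hθ]
      have hNne : ((N:ℝ)+1) ≠ 0 := by positivity
      push_cast
      field_simp
    rw [harg]
    exact Real.cos_eq_zero_iff.mpr ⟨(j:ℕ), by push_cast; ring⟩
  set wR : Fin (N+1) → ℝ := fun k => Real.sin ((((k:ℕ):ℝ)+1) * θ) with hwR
  have hAw : (stiffFEM c h (N+1)).mulVec wR = lam • (massFEM (N+1)).mulVec wR :=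
    eigen_real c h (ne_of_gt hh) N hN θ hbc
  have hdet : IsUnit (massFEM (N+1)).det := isUnit_iff_ne_zero.mpr (mass_det_ne_zero N hN)
  have hR : ((massFEM (N+1))⁻¹ * stiffFEM c h (N+1)).mulVec wR = lam • wR := by
    rw [← Matrix.mulVec_mulVec, hAw, Matrix.mulVec_smul, Matrix.mulVec_mulVec,
      Matrix.nonsing_inv_mul _ hdet, Matrix.one_mulVec]
  refine ⟨fun k => ((wR k : ℝ) : ℂ), ?_, ?_⟩
  · intro hcon
    have h0 : wR ⟨0, by omega⟩ = 0 := by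
      have h2 := congrFun hcon ⟨0, by omega⟩
      rw [Pi.zero_apply] at h2
      exact_mod_cast h2
    have : Real.sin θ ≠ 0 := ne_of_gt (Real.sin_pos_of_pos_of_lt_pi hθ1 hθ2)
    apply this
    have h1 : wR ⟨0, by omega⟩ = Real.sin θ := by
      rw [hwR]; norm_num
    rw [← h1, h0]
  · funext i
    have hmap := RingHom.map_mulVec (Complex.ofRealHom)
      ((massFEM (N+1))⁻¹ * stiffFEM c h (N+1)) wR i
    have hcoe : ((massFEM (N+1))⁻¹ * stiffFEM c h (N+1)).map (fun x : ℝ => (x:ℂ))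
        = ((massFEM (N+1))⁻¹ * stiffFEM c h (N+1)).map Complex.ofRealHom := rfl
    rw [hcoe]
    show (((massFEM (N+1))⁻¹ * stiffFEM c h (N+1)).map Complex.ofRealHom).mulVec
        (Complex.ofRealHom ∘ wR) i = _
    rw [← hmap]
    rw [congrFun hR i]
    show ((lam • wR) i : ℂ) = ((lam:ℂ) • fun k => ((wR k : ℝ):ℂ)) i
    simp [Pi.smul_apply, smul_eq_mul]

/-- M is invertible and the eigenvalues of M⁻¹A_h^{FEM} are exactly
the N+1 distinct numbers λ_j = (c²/h²)(6 − 6cos θ_j)/(2 + cos θ_j),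
θ_j = (2j−1)π/(2(N+1)), j = 1,…,N+1 (encoded j : Fin (N+1), "j" = j.val+1). -/
theorem MinvStiff_eigenvalues (c h : ℝ) (hc : 0 < c) (hh : 0 < h) (N : ℕ) (hN : 1 ≤ N) :
    IsUnit (massFEM (N+1)) ∧
    Function.Injective (fun j : Fin (N+1) =>
      (c^2/h^2) * (6 - 6*Real.cos ((2*((j:ℕ):ℝ)+1) * Real.pi / (2*((N:ℝ)+1)))) /
        (2 + Real.cos ((2*((j:ℕ):ℝ)+1) * Real.pi / (2*((N:ℝ)+1))))) ∧
    (∀ μ : ℂ, (∃ w : Fin (N+1) → ℂ, w ≠ 0 ∧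
        (((massFEM (N+1))⁻¹ * stiffFEM c h (N+1)).map (fun x => (x:ℂ))).mulVec w = μ • w) ↔
      ∃ j : Fin (N+1),
        μ = (((c^2/h^2) * (6 - 6*Real.cos ((2*((j:ℕ):ℝ)+1) * Real.pi / (2*((N:ℝ)+1)))) /
          (2 + Real.cos ((2*((j:ℕ):ℝ)+1) * Real.pi / (2*((N:ℝ)+1)))) : ℝ) : ℂ)) := by
  have hMdet := mass_det_ne_zero N hN
  refine ⟨(Matrix.isUnit_iff_isUnit_det _).mpr (isUnit_iff_ne_zero.mpr hMdet),
    lam_inj c h hc hh N, ?_⟩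
  intro μ
  exact spectrum_count (((massFEM (N+1))⁻¹ * stiffFEM c h (N+1)).map (fun x : ℝ => (x:ℂ)))
    (fun j : Fin (N+1) =>
      (((c^2/h^2) * (6 - 6*Real.cos ((2*((j:ℕ):ℝ)+1) * Real.pi / (2*((N:ℝ)+1)))) /
        (2 + Real.cos ((2*((j:ℕ):ℝ)+1) * Real.pi / (2*((N:ℝ)+1)))) : ℝ) : ℂ))
    (fun a b hab => lam_inj c h hc hh N (Complex.ofReal_injective hab))
    (fun j => eigen_complex c h hc hh N hN j) μ
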